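/- Let B₀, B₁ : Ω → Sym(2n,ℝ) be measurable with B₁ positive semidefinite a.e. and B₁ = B₀ outside D ⊂ Ω. Let v₀, v₁ ∈ L²(Ω;ℝ²ⁿ) satisfy ∫_Ω B₀v₀·v₀ − 2∫_Ω B₀v₀·v₁ + ∫_Ω B₁v₁·v₁ = W and ∫_Ω B₁v₁·v₁ − 2∫_Ω B₁v₁·v₀ + ∫_Ω B₀v₀·v₀ = −W for some real W. Then W = −∫_Ω B₁(v₀−v₁)·(v₀−v₁) + ∫_D (B₁−B₀)v₀·v₀, and consequently W ≤ ∫_D (B₁−B₀)v₀·v₀; if moreover (B₁−B₀)(x) ≤ Λ I a.e. on D, then W ≤ Λ ∫_D |v₀|². -/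

import Mathlib

open MeasureTheory Matrix

/-- Upper-bound half of the energy inequality: under the two integration-by-parts
identities, the power gap `W` equals
`−∫_Ω B₁(v₀−v₁)·(v₀−v₁) + ∫_D (B₁−B₀)v₀·v₀`, hence `W ≤ ∫_D (B₁−B₀)v₀·v₀`, and
if `B₁−B₀ ≤ ΛI` a.e. on `D` then `W ≤ Λ∫_D |v₀|²`. -/
theorem energy_upper_bound (n : ℕ)
    (Ω D : Set (Fin n → ℝ)) (hΩ : MeasurableSet Ω) (hD : MeasurableSet D)
    (hDΩ : D ⊆ Ω)
    (B₀ B₁ : (Fin n → ℝ) → Matrix (Fin n ⊕ Fin n) (Fin n ⊕ Fin n) ℝ)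
    (hB₀symm : ∀ x, (B₀ x).IsSymm) (hB₁symm : ∀ x, (B₁ x).IsSymm)
    (hB₁pos : ∀ x, (B₁ x).PosSemidef)
    (hsupp : ∀ x ∈ Ω \ D, B₁ x = B₀ x)
    (v₀ v₁ : (Fin n → ℝ) → (Fin n ⊕ Fin n) → ℝ)
    (h00 : IntegrableOn (fun x => v₀ x ⬝ᵥ (B₀ x).mulVec (v₀ x)) Ω)
    (h11 : IntegrableOn (fun x => v₁ x ⬝ᵥ (B₁ x).mulVec (v₁ x)) Ω)
    (h10 : IntegrableOn (fun x => v₀ x ⬝ᵥ (B₁ x).mulVec (v₁ x)) Ω)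
    (h100 : IntegrableOn (fun x => v₀ x ⬝ᵥ (B₁ x).mulVec (v₀ x)) Ω)
    (h01 : IntegrableOn (fun x => v₁ x ⬝ᵥ (B₀ x).mulVec (v₀ x)) Ω)
    (hv0sq : IntegrableOn (fun x => v₀ x ⬝ᵥ v₀ x) D)
    (W : ℝ)
    (hid₁ : (∫ x in Ω, v₀ x ⬝ᵥ (B₀ x).mulVec (v₀ x))
        - 2 * (∫ x in Ω, v₁ x ⬝ᵥ (B₀ x).mulVec (v₀ x))
        + (∫ x in Ω, v₁ x ⬝ᵥ (B₁ x).mulVec (v₁ x)) = W)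
    (hid₂ : (∫ x in Ω, v₁ x ⬝ᵥ (B₁ x).mulVec (v₁ x))
        - 2 * (∫ x in Ω, v₀ x ⬝ᵥ (B₁ x).mulVec (v₁ x))
        + (∫ x in Ω, v₀ x ⬝ᵥ (B₀ x).mulVec (v₀ x)) = -W) :
    W = -(∫ x in Ω, (v₀ x - v₁ x) ⬝ᵥ (B₁ x).mulVec (v₀ x - v₁ x))
        + ∫ x in D, v₀ x ⬝ᵥ ((B₁ x) - (B₀ x)).mulVec (v₀ x) ∧
    W ≤ ∫ x in D, v₀ x ⬝ᵥ ((B₁ x) - (B₀ x)).mulVec (v₀ x) ∧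
    ∀ Λ : ℝ, (∀ x ∈ D, ∀ X : Fin n ⊕ Fin n → ℝ,
        X ⬝ᵥ ((B₁ x) - (B₀ x)).mulVec X ≤ Λ * (X ⬝ᵥ X)) →
      W ≤ Λ * ∫ x in D, v₀ x ⬝ᵥ v₀ x := by

  -- notation
  set a := ∫ x in Ω, v₀ x ⬝ᵥ (B₀ x).mulVec (v₀ x) with ha
  set c := ∫ x in Ω, v₁ x ⬝ᵥ (B₁ x).mulVec (v₁ x) with hc
  set d := ∫ x in Ω, v₀ x ⬝ᵥ (B₁ x).mulVec (v₁ x) with hd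
  set e := ∫ x in Ω, v₀ x ⬝ᵥ (B₁ x).mulVec (v₀ x) with he
  have symm1 : ∀ x (u w : Fin n ⊕ Fin n → ℝ),
      u ⬝ᵥ (B₁ x).mulVec w = w ⬝ᵥ (B₁ x).mulVec u := by
    intro x u w
    rw [Matrix.dotProduct_mulVec, ← Matrix.mulVec_transpose, (hB₁symm x).eq,
      dotProduct_comm]
  -- expansion of the quadratic form
  have hQexp : ∀ x, (v₀ x - v₁ x) ⬝ᵥ (B₁ x).mulVec (v₀ x - v₁ x)
      = v₀ x ⬝ᵥ (B₁ x).mulVec (v₀ x) - 2 * (v₀ x ⬝ᵥ (B₁ x).mulVec (v₁ x))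
        + v₁ x ⬝ᵥ (B₁ x).mulVec (v₁ x) := by
    intro x
    have h := symm1 x (v₁ x) (v₀ x)
    simp only [Matrix.mulVec_sub, sub_dotProduct, dotProduct_sub]
    rw [h]; ring
  have h2d : (∫ x in Ω, 2 * (v₀ x ⬝ᵥ (B₁ x).mulVec (v₁ x))) = 2 * d :=
    integral_const_mul 2 _
  have hQ : (∫ x in Ω, (v₀ x - v₁ x) ⬝ᵥ (B₁ x).mulVec (v₀ x - v₁ x))
      = e - 2 * d + c := by
    calc (∫ x in Ω, (v₀ x - v₁ x) ⬝ᵥ (B₁ x).mulVec (v₀ x - v₁ x))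
        = ∫ x in Ω, (v₀ x ⬝ᵥ (B₁ x).mulVec (v₀ x)
            - 2 * (v₀ x ⬝ᵥ (B₁ x).mulVec (v₁ x))
            + v₁ x ⬝ᵥ (B₁ x).mulVec (v₁ x)) := by simp only [hQexp]
      _ = (∫ x in Ω, (v₀ x ⬝ᵥ (B₁ x).mulVec (v₀ x)
            - 2 * (v₀ x ⬝ᵥ (B₁ x).mulVec (v₁ x)))) + c :=
        integral_add (h100.sub (h10.const_mul 2)) h11
      _ = e - 2 * d + c := by
        rw [integral_sub h100 (h10.const_mul 2), h2d]
  have hdiff : ∀ x, v₀ x ⬝ᵥ ((B₁ x) - (B₀ x)).mulVec (v₀ x)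
      = v₀ x ⬝ᵥ (B₁ x).mulVec (v₀ x) - v₀ x ⬝ᵥ (B₀ x).mulVec (v₀ x) := by
    intro x
    simp [Matrix.sub_mulVec, dotProduct_sub]
  have hIdiff : IntegrableOn (fun x => v₀ x ⬝ᵥ ((B₁ x) - (B₀ x)).mulVec (v₀ x)) Ω := by
    rw [show (fun x => v₀ x ⬝ᵥ ((B₁ x) - (B₀ x)).mulVec (v₀ x))
        = (fun x => v₀ x ⬝ᵥ (B₁ x).mulVec (v₀ x)
            - v₀ x ⬝ᵥ (B₀ x).mulVec (v₀ x)) from funext hdiff]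
    exact h100.sub h00
  have hEΩ : (∫ x in Ω, v₀ x ⬝ᵥ ((B₁ x) - (B₀ x)).mulVec (v₀ x)) = e - a := by
    rw [show (fun x => v₀ x ⬝ᵥ ((B₁ x) - (B₀ x)).mulVec (v₀ x))
        = (fun x => v₀ x ⬝ᵥ (B₁ x).mulVec (v₀ x)
            - v₀ x ⬝ᵥ (B₀ x).mulVec (v₀ x)) from funext hdiff]
    exact integral_sub h100 h00
  have hED : (∫ x in D, v₀ x ⬝ᵥ ((B₁ x) - (B₀ x)).mulVec (v₀ x)) = e - a := by
    rw [← hEΩ, ← Set.union_diff_cancel hDΩ,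
      setIntegral_union Set.disjoint_sdiff_right (hΩ.diff hD)
        (hIdiff.mono_set hDΩ) (hIdiff.mono_set (Set.diff_subset))]
    have hz : ∀ x ∈ Ω \ D, v₀ x ⬝ᵥ ((B₁ x) - (B₀ x)).mulVec (v₀ x) = 0 := by
      intro x hx
      rw [hsupp x hx]
      simp
    rw [setIntegral_congr_fun (hΩ.diff hD) hz]
    simp
  have hQnn : 0 ≤ ∫ x in Ω, (v₀ x - v₁ x) ⬝ᵥ (B₁ x).mulVec (v₀ x - v₁ x) := by
    apply setIntegral_nonneg hΩ
    intro x _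
    have := (hB₁pos x).dotProduct_mulVec_nonneg (v₀ x - v₁ x)
    simpa using this
  have part1 : W = -(∫ x in Ω, (v₀ x - v₁ x) ⬝ᵥ (B₁ x).mulVec (v₀ x - v₁ x))
      + ∫ x in D, v₀ x ⬝ᵥ ((B₁ x) - (B₀ x)).mulVec (v₀ x) := by
    rw [hQ, hED]; linarith
  refine ⟨part1, by linarith, ?_⟩
  intro Λ hΛ
  have hmono : (∫ x in D, v₀ x ⬝ᵥ ((B₁ x) - (B₀ x)).mulVec (v₀ x))
      ≤ ∫ x in D, Λ * (v₀ x ⬝ᵥ v₀ x) :=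
    setIntegral_mono_on (hIdiff.mono_set hDΩ) (hv0sq.const_mul Λ) hD
      (fun x hx => hΛ x hx (v₀ x))
  rw [integral_const_mul] at hmono
  linarith
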